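/- Let k ≥ 1 be a natural number, and let (L, R, E) be a bipartite graph in which L contains every binary string of length k+1 and |R| = 2^k. If (L, R, E) admits online matchings up to size 2^k, then there exists a binary string x of length k+1 whose degree in (L, R, E) is strictly greater than 2^(k−1). -/

import Mathlib

/-- The set of neighbors of a set `S` of left vertices in the bipartite graph
with edge relation `E`. -/
def nbhd {α β : Type*} (E : Set (α × β)) (S : Set α) : Set β :=
  {y | ∃ x ∈ S, (x, y) ∈ E}

/-- A bipartite graph with left vertices `L` and edge relation `E` admits online
matchings up to size `s` if there is a strategy `g`, mapping each finite sequence of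
pairwise distinct left vertices to a right vertex, such that for every sequence
`x₁, …, x_m` of pairwise distinct elements of `L` with `m ≤ s`, setting
`y_j = g(x₁, …, x_j)`, every `y_j` is a neighbor of `x_j` and the `y_j` are pairwise
distinct. -/
def AdmitsOnlineMatching {α β : Type*} (L : Set α) (E : Set (α × β)) (s : ℕ) : Prop :=
  ∃ g : List α → β,
    ∀ xs : List α, xs.Nodup → (∀ x ∈ xs, x ∈ L) → xs.length ≤ s →
      (∀ i : Fin xs.length, (xs.get i, g (xs.take (i + 1))) ∈ E) ∧
      (∀ i j : Fin xs.length, i ≠ j → g (xs.take (i + 1)) ≠ g (xs.take (j + 1)))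

/-- The lists of booleans of a fixed length `n` form a set of cardinality `2 ^ n`. -/
lemma ncard_length_eq (n : ℕ) : {l : List Bool | l.length = n}.ncard = 2 ^ n := by
  rw [← Nat.card_coe_set_eq]
  have e : {l : List Bool | l.length = n} ≃ List.Vector Bool n :=
    (Equiv.setCongr rfl).trans (Equiv.refl _)
  rw [Nat.card_congr e, Nat.card_eq_fintype_card, card_vector]
  simp

/-- Makhlin's remark: let `k ≥ 1` and `(L, R, E)` be a bipartite graph
with `L` containing every binary string of length `k+1` and `|R| = 2^k`.  If it admits
online matchings up to size `2^k`, then some binary string `x` of length `k+1` has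
degree strictly greater than `2^(k-1)`. -/
theorem stmt_12 {β : Type} (k : ℕ) (hk : 1 ≤ k)
    (L : Set (List Bool)) (hL : ∀ x : List Bool, x.length = k + 1 → x ∈ L)
    (R : Set β) (hRfin : R.Finite) (hRcard : R.ncard = 2 ^ k)
    (E : Set (List Bool × β)) (hE : ∀ p ∈ E, p.1 ∈ L ∧ p.2 ∈ R)
    (hOM : AdmitsOnlineMatching L E (2 ^ k)) :
    ∃ x : List Bool, x.length = k + 1 ∧ 2 ^ (k - 1) < (nbhd E {x}).ncard := by
  classical
  by_contra hcon
  push_neg at hcon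
  -- hcon : ∀ x, x.length = k + 1 → (nbhd E {x}).ncard ≤ 2 ^ (k - 1)
  -- Finsets for the two sides
  have hLfin : {l : List Bool | l.length = k + 1}.Finite := List.finite_length_eq Bool (k + 1)
  set LF : Finset (List Bool) := hLfin.toFinset with hLFdef
  have hLFcard : LF.card = 2 ^ (k + 1) := by
    rw [← Set.ncard_eq_toFinset_card _ hLfin]
    exact ncard_length_eq (k + 1)
  have hmemLF : ∀ x, x ∈ LF ↔ x.length = k + 1 := by
    intro x; simp [hLFdef, hLfin.mem_toFinset]
  set RF : Finset β := hRfin.toFinset with hRFdef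
  have hRFcard : RF.card = 2 ^ k := by
    rw [← Set.ncard_eq_toFinset_card _ hRfin]; exact hRcard
  have hmemRF : ∀ y, y ∈ RF ↔ y ∈ R := fun y => hRfin.mem_toFinset
  -- degrees of left vertices are bounded by 2 ^ (k-1)
  have hdeg : ∀ x ∈ LF, (RF.filter (fun y => (x, y) ∈ E)).card ≤ 2 ^ (k - 1) := by
    intro x hx
    have hset : ((RF.filter (fun y => (x, y) ∈ E)) : Set β) = nbhd E {x} := by
      ext y
      simp only [Finset.coe_filter, Set.mem_setOf_eq, hmemRF, nbhd, Set.mem_singleton_iff]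
      constructor
      · rintro ⟨-, h⟩; exact ⟨x, rfl, h⟩
      · rintro ⟨x', rfl, h⟩; exact ⟨(hE _ h).2, h⟩
    have := hcon x ((hmemLF x).1 hx)
    calc (RF.filter (fun y => (x, y) ∈ E)).card
        = ((RF.filter (fun y => (x, y) ∈ E)) : Set β).ncard := (Set.ncard_coe_finset _).symm
      _ = (nbhd E {x}).ncard := by rw [hset]
      _ ≤ 2 ^ (k - 1) := this
  -- double counting: some y₀ ∈ R has at most 2^k neighbors of length k+1
  have hsum : ∑ y ∈ RF, (LF.filter (fun x => (x, y) ∈ E)).card ≤ 2 ^ k * 2 ^ k := by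
    have hswap : ∑ y ∈ RF, (LF.filter (fun x => (x, y) ∈ E)).card
        = ∑ x ∈ LF, (RF.filter (fun y => (x, y) ∈ E)).card := by
      simp only [Finset.card_filter]
      exact Finset.sum_comm
    rw [hswap]
    calc ∑ x ∈ LF, (RF.filter (fun y => (x, y) ∈ E)).card
        ≤ ∑ _x ∈ LF, 2 ^ (k - 1) := Finset.sum_le_sum hdeg
      _ = 2 ^ (k + 1) * 2 ^ (k - 1) := by rw [Finset.sum_const, hLFcard, smul_eq_mul]
      _ = 2 ^ k * 2 ^ k := by
          rw [← pow_add, ← pow_add]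
          congr 1
          omega
  have hy₀ : ∃ y₀ ∈ RF, (LF.filter (fun x => (x, y₀) ∈ E)).card ≤ 2 ^ k := by
    by_contra hno
    push_neg at hno
    have : RF.card * (2 ^ k + 1) ≤ ∑ y ∈ RF, (LF.filter (fun x => (x, y) ∈ E)).card := by
      rw [Finset.card_eq_sum_ones RF, Finset.sum_mul, one_mul]
      exact Finset.sum_le_sum fun y hy => hno y hy
    rw [hRFcard] at this
    have h1 : (0:ℕ) < 2 ^ k := Nat.pow_pos (by norm_num)
    nlinarith [hsum]
  obtain ⟨y₀, hy₀R, hy₀deg⟩ := hy₀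
  -- at least 2^k strings of length k+1 are not adjacent to y₀
  have hScard : 2 ^ k ≤ (LF.filter (fun x => ¬ (x, y₀) ∈ E)).card := by
    have := Finset.card_filter_add_card_filter_not (s := LF)
      (p := fun x => (x, y₀) ∈ E)
    have h2 : 2 ^ (k + 1) = 2 ^ k + 2 ^ k := by rw [pow_succ]; ring
    omega
  obtain ⟨S', hS'sub, hS'card⟩ := Finset.exists_subset_card_eq hScard
  -- feed the list of these strings to the online matching strategy
  obtain ⟨g, hg⟩ := hOM
  set xs : List (List Bool) := S'.toList with hxsdef
  have hxslen : xs.length = 2 ^ k := by rw [hxsdef, Finset.length_toList, hS'card]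
  have hxsmem : ∀ x ∈ xs, x ∈ S' := fun x hx => (Finset.mem_toList).1 hx
  obtain ⟨h1, h2⟩ := hg xs (Finset.nodup_toList S')
    (fun x hx => hL x ((hmemLF x).1 (Finset.filter_subset _ _ (hS'sub (hxsmem x hx)))))
    (le_of_eq hxslen)
  -- the responses give an injection from Fin (2^k) into R \ {y₀}
  set f : Fin xs.length → β := fun i => g (xs.take (i + 1)) with hfdef
  have hfmem : ∀ i : Fin xs.length, f i ∈ R \ {y₀} := by
    intro i
    have hxi : xs.get i ∈ S' := hxsmem _ (xs.get_mem i)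
    have hnE : ¬ (xs.get i, y₀) ∈ E := (Finset.mem_filter.1 (hS'sub hxi)).2
    have hEi := h1 i
    refine ⟨(hE _ hEi).2, ?_⟩
    intro h
    rw [Set.mem_singleton_iff] at h
    exact hnE (h ▸ hEi)
  have hfinj : Set.InjOn f Set.univ := by
    intro i _ j _ hij
    by_contra hne
    exact h2 i j hne hij
  have hle : (Set.univ : Set (Fin xs.length)).ncard ≤ (R \ {y₀}).ncard :=
    Set.ncard_le_ncard_of_injOn f (fun i _ => hfmem i) hfinj
      (hRfin.subset Set.diff_subset)
  have huniv : (Set.univ : Set (Fin xs.length)).ncard = 2 ^ k := by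
    rw [Set.ncard_univ, Nat.card_eq_fintype_card, Fintype.card_fin, hxslen]
  have hdiff : (R \ {y₀}).ncard = 2 ^ k - 1 := by
    rw [Set.ncard_diff_singleton_of_mem ((hmemRF y₀).1 hy₀R), hRcard]
  have h1' : (0:ℕ) < 2 ^ k := Nat.pow_pos (by norm_num)
  omega
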